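/- Let A be a chain-complete PCA, g : A ⇀ B a decidable chain-continuous partial applicative morphism, F : BA → BA a total order-preserving function, and h(α) = {b ∈ B | b represents α w.r.t. g}. If r ∈ B represents F w.r.t. h (i.e., r·h(α) ⊆ h(F(α)) for all α), then z·r represents the largest fixpoint of F w.r.t. g, where z ∈ B# is the guarded fixpoint combinator. Consequently, if F is effectively representable w.r.t. h, then the largest fixpoint of F is effectively representable w.r.t. g. -/

import Mathlib

/-- Lifted (Kleene-style) application on possibly undefined expressions. -/
def OApp {A : Type*} (app : A → A → Option A) (x y : Option A) : Option A :=
  x.bind fun a => y.bind fun b => app a b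

/-- Axiom (A) of a partial applicative poset: the application has downwards closed
domain and preserves the order. -/
def PAPax {A : Type*} [PartialOrder A] (app : A → A → Option A) : Prop :=
  ∀ ⦃a' a b' b c : A⦄, a' ≤ a → b' ≤ b → app a b = some c →
    ∃ c', app a' b' = some c' ∧ c' ≤ c

/-- α ∈ BA: a partial function with downwards closed domain which is
order-preserving on its domain. -/
def IsBA {A : Type*} [PartialOrder A] (α : A → Option A) : Prop :=
  ∀ ⦃a b : A⦄, a ≤ b → ∀ ⦃c : A⦄, α b = some c → ∃ c', α a = some c' ∧ c' ≤ c

/-- The order on BA: α ≤ β iff whenever β(a) is defined, α(a) is defined and α(a) ≤ β(a). -/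
def BAle {A : Type*} [PartialOrder A] (α β : A → Option A) : Prop :=
  ∀ ⦃a c : A⦄, β a = some c → ∃ c', α a = some c' ∧ c' ≤ c

/-- A (relative, ordered) partial combinatory algebra. -/
structure PCA (A : Type*) [PartialOrder A] where
  app : A → A → Option A
  mono : PAPax app
  filt : Set A
  filt_app : ∀ ⦃a⦄, a ∈ filt → ∀ ⦃b⦄, b ∈ filt → ∀ ⦃c⦄, app a b = some c → c ∈ filt
  filt_up : ∀ ⦃a⦄, a ∈ filt → ∀ ⦃b⦄, a ≤ b → b ∈ filt
  k : A
  s : A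
  k_mem : k ∈ filt
  s_mem : s ∈ filt
  k_spec : ∀ a b : A, ∃ c, OApp app (OApp app (some k) (some a)) (some b) = some c ∧ c ≤ a
  s_def : ∀ a b : A, ∃ c, OApp app (OApp app (some s) (some a)) (some b) = some c
  s_spec : ∀ a b c e : A,
    OApp app (OApp app (some a) (some c)) (OApp app (some b) (some c)) = some e →
    ∃ e', OApp app (OApp app (OApp app (some s) (some a)) (some b)) (some c) = some e' ∧ e' ≤ e

/-- A partial applicative morphism between relative ordered PCAs. -/
structure PAM {A B : Type*} [PartialOrder A] [PartialOrder B]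
    (P : PCA A) (Q : PCA B) where
  map : A → Set B
  down : ∀ a : A, ∀ ⦃x y : B⦄, x ≤ y → y ∈ map a → x ∈ map a
  filt_ne : ∀ ⦃a⦄, a ∈ P.filt → ∃ b ∈ map a, b ∈ Q.filt
  track : ∃ t ∈ Q.filt, ∀ ⦃a a' c : A⦄, P.app a a' = some c →
    ∀ ⦃b⦄, b ∈ map a → ∀ ⦃b'⦄, b' ∈ map a' →
      ∃ d, OApp Q.app (OApp Q.app (some t) (some b)) (some b') = some d ∧ d ∈ map c
  ord : ∃ u ∈ Q.filt, (∀ a : A, ∀ ⦃b⦄, b ∈ map a → ∃ d, Q.app u b = some d) ∧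
    (∀ ⦃a a' : A⦄, a ≤ a' → ∀ ⦃b⦄, b ∈ map a → ∀ ⦃d⦄, Q.app u b = some d → d ∈ map a')

/-- `F ≤ G` as maps into downsets of `B`, realized by some element of the filter of `B`. -/
def RealLe {A B : Type*} [PartialOrder B] (Q : PCA B) (F G : A → Set B) : Prop :=
  ∃ s ∈ Q.filt, ∀ a : A, ∀ b ∈ F a, ∃ d, Q.app s b = some d ∧ d ∈ G a

/-- Computational density of a partial applicative morphism. -/
def CD {A B : Type*} [PartialOrder A] [PartialOrder B] {P : PCA A} {Q : PCA B}
    (f : PAM P Q) : Prop :=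
  ∃ n ∈ Q.filt, ∀ s ∈ Q.filt, ∃ r ∈ P.filt, ∀ b ∈ f.map r,
    ∃ d, Q.app n b = some d ∧ d ≤ s

/-- Chain-completeness: every non-empty chain has a greatest lower bound. -/
def ChainComplete (A : Type*) [PartialOrder A] : Prop :=
  ∀ C : Set A, C.Nonempty → IsChain (· ≤ ·) C → ∃ g : A, IsGLB C g

/-- `b` represents the partial function `α` w.r.t. the morphism with map `gmap`:
for `a ∈ dom α`, `b·gmap a` is defined and contained in `gmap (α a)`. -/
def Represents {A B : Type*} [PartialOrder B] (Q : PCA B)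
    (gmap : A → Set B) (b : B) (α : A → Option A) : Prop :=
  ∀ ⦃a c : A⦄, α a = some c → ∀ ⦃x : B⦄, x ∈ gmap a →
    ∃ d, Q.app b x = some d ∧ d ∈ gmap c

/-- Chain-continuity of a morphism: it sends greatest lower bounds of non-empty
chains to the intersection of the values. -/
def ChainCont {A B : Type*} [PartialOrder A] (gmap : A → Set B) : Prop :=
  ∀ C : Set A, C.Nonempty → IsChain (· ≤ ·) C → ∀ m : A, IsGLB C m →
    gmap m = ⋂ a ∈ C, gmap a

/-- Decidability of a morphism: some `d ∈ B#` sends `g(⊤_A)` into `↓⊤_B` and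
`g(⊥_A)` into `↓⊥_B` (where `⊤ = k` and `⊥ = k·(s·k·k)`). -/
def DecidableM {A B : Type*} [PartialOrder A] [PartialOrder B]
    (P : PCA A) (Q : PCA B) (botA : A) (botB : B) (gmap : A → Set B) : Prop :=
  ∃ d ∈ Q.filt, (∀ b ∈ gmap P.k, ∃ e, Q.app d b = some e ∧ e ≤ Q.k) ∧
    (∀ b ∈ gmap botA, ∃ e, Q.app d b = some e ∧ e ≤ botB)

lemma BAle_trans' {A : Type*} [PartialOrder A] {α β γ : A → Option A}
    (h1 : BAle α β) (h2 : BAle β γ) : BAle α γ := by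
  intro a c hc
  obtain ⟨c', hc', le1⟩ := h2 hc
  obtain ⟨c'', hc'', le2⟩ := h1 hc'
  exact ⟨c'', hc'', le2.trans le1⟩

/-- Infima of nonempty `BAle`-chains of `BA` elements, built pointwise from
chain-completeness of `A`. -/
lemma exists_chain_inf' {A : Type*} [PartialOrder A] (hcc : ChainComplete A)
    (C : Set (A → Option A)) (hBA : ∀ α ∈ C, IsBA α)
    (hC : IsChain (fun α β => BAle α β) C) :
    ∃ m : A → Option A, IsBA m ∧
      (∀ ⦃a c⦄, m a = some c →
        {v | ∃ α ∈ C, α a = some v}.Nonempty ∧ IsGLB {v | ∃ α ∈ C, α a = some v} c) ∧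
      (∀ ⦃a⦄, (∃ α ∈ C, ∃ v, α a = some v) → ∃ c, m a = some c) ∧
      (∀ a, IsChain (· ≤ ·) {v | ∃ α ∈ C, α a = some v}) := by
  classical
  have hVch : ∀ a, IsChain (· ≤ ·) {v | ∃ α ∈ C, α a = some v} := by
    intro a v hv w hw hvw
    obtain ⟨α, hα, hαv⟩ := hv
    obtain ⟨β, hβ, hβw⟩ := hw
    rcases eq_or_ne α β with rfl | hne
    · rw [hαv] at hβw
      exact absurd (Option.some.inj hβw) hvw
    · rcases hC hα hβ hne with h | h
      · obtain ⟨v', hv', hle⟩ := h hβw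
        rw [hαv] at hv'
        obtain rfl := Option.some.inj hv'
        exact Or.inl hle
      · obtain ⟨w', hw', hle⟩ := h hαv
        rw [hβw] at hw'
        obtain rfl := Option.some.inj hw'
        exact Or.inr hle
  refine ⟨fun a => if h : {v | ∃ α ∈ C, α a = some v}.Nonempty
      then some (hcc _ h (hVch a)).choose else none, ?_, ?_, ?_, hVch⟩
  · -- IsBA
    intro a b hab c hc
    by_cases hb : {v | ∃ α ∈ C, α b = some v}.Nonempty
    · simp only [dif_pos hb] at hc
      obtain rfl := Option.some.inj hc
      obtain ⟨v0, α0, hα0, hα0b⟩ := id hb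
      obtain ⟨w0, hw0, -⟩ := hBA α0 hα0 hab hα0b
      have ha : {v | ∃ α ∈ C, α a = some v}.Nonempty := ⟨w0, α0, hα0, hw0⟩
      have glb_a := (hcc _ ha (hVch a)).choose_spec
      have glb_b := (hcc _ hb (hVch b)).choose_spec
      refine ⟨_, dif_pos ha, glb_b.2 ?_⟩
      rintro v ⟨α, hα, hαb⟩
      obtain ⟨w, hw, hwv⟩ := hBA α hα hab hαb
      exact (glb_a.1 ⟨α, hα, hw⟩).trans hwv
    · simp only [dif_neg hb] at hc
      cases hc
  · -- glb spec
    intro a c hc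
    by_cases ha : {v | ∃ α ∈ C, α a = some v}.Nonempty
    · simp only [dif_pos ha] at hc
      obtain rfl := Option.some.inj hc
      exact ⟨ha, (hcc _ ha (hVch a)).choose_spec⟩
    · simp only [dif_neg ha] at hc
      cases hc
  · -- definedness
    rintro a ⟨α, hα, v, hv⟩
    have ha : {v | ∃ α ∈ C, α a = some v}.Nonempty := ⟨v, α, hα, hv⟩
    exact ⟨_, dif_pos ha⟩

/-- Let `g : A ⇀ B` be decidable and chain-continuous, `A`
chain-complete, `F : BA → BA` total and order-preserving, and let
`h(α) = {b | b represents α w.r.t. g}`. If `r` represents `F` w.r.t. `h`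
(`r·h(α) ⊆ h(F(α))`), then `z·r` represents the largest fixpoint of `F` w.r.t. `g`,
where `z ∈ B#` is the guarded fixpoint combinator. Consequently, if `F` is
effectively representable w.r.t. `h`, then the largest fixpoint of `F` is
effectively representable w.r.t. `g`. -/
theorem fixpoint_representable {A B : Type*} [PartialOrder A] [PartialOrder B]
    (P : PCA A) (Q : PCA B) (hcc : ChainComplete A) (g : PAM P Q)
    (iA botA : A)
    (hiA : OApp P.app (OApp P.app (some P.s) (some P.k)) (some P.k) = some iA)
    (hbotA : P.app P.k iA = some botA)
    (iB botB : B)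
    (hiB : OApp Q.app (OApp Q.app (some Q.s) (some Q.k)) (some Q.k) = some iB)
    (hbotB : Q.app Q.k iB = some botB)
    (hdec : DecidableM P Q botA botB g.map)
    (hcont : ChainCont g.map)
    (F : {α : A → Option A // IsBA α} → {α : A → Option A // IsBA α})
    (hF : ∀ α β : {α : A → Option A // IsBA α}, BAle α.1 β.1 → BAle (F α).1 (F β).1)
    -- the guarded fixpoint combinator z ∈ B#: z·a is defined and z·a·b ≼ a·(z·a)·b
    (z : B) (hz_mem : z ∈ Q.filt)
    (hz_def : ∀ a : B, ∃ za, Q.app z a = some za)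
    (hz_spec : ∀ a za : B, Q.app z a = some za → ∀ b e : B,
      OApp Q.app (OApp Q.app (some a) (some za)) (some b) = some e →
      ∃ e', Q.app za b = some e' ∧ e' ≤ e)
    -- fp is the largest fixpoint of F
    (fp : {α : A → Option A // IsBA α}) (hfp : F fp = fp)
    (hfp_max : ∀ f' : {α : A → Option A // IsBA α},
      BAle f'.1 (F f').1 → BAle f'.1 fp.1) :
    (∀ r : B,
      (∀ α : {α : A → Option A // IsBA α}, ∀ b : B, Represents Q g.map b α.1 →
        ∃ d, Q.app r b = some d ∧ Represents Q g.map d (F α).1) →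
      ∀ zr : B, Q.app z r = some zr → Represents Q g.map zr fp.1) ∧
    ((∃ r ∈ Q.filt,
      ∀ α : {α : A → Option A // IsBA α}, ∀ b : B, Represents Q g.map b α.1 →
        ∃ d, Q.app r b = some d ∧ Represents Q g.map d (F α).1) →
      ∃ s ∈ Q.filt, Represents Q g.map s fp.1) := by
  classical
  have main : ∀ r : B,
      (∀ α : {α : A → Option A // IsBA α}, ∀ b : B, Represents Q g.map b α.1 →
        ∃ d, Q.app r b = some d ∧ Represents Q g.map d (F α).1) →
      ∀ zr : B, Q.app z r = some zr → Represents Q g.map zr fp.1 := by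
    intro r hr zr hzr
    -- the set of "good" elements of BA
    set S : Set {α : A → Option A // IsBA α} :=
      {α | BAle fp.1 α.1 ∧ Represents Q g.map zr α.1 ∧ BAle (F α).1 α.1} with hSdef
    -- the everywhere-undefined function is the top element of BA, and is good
    have topBA : IsBA (fun _ : A => none) := by
      intro a b _ c hc
      cases hc
    have topS : (⟨fun _ => none, topBA⟩ : {α : A → Option A // IsBA α}) ∈ S := by
      refine ⟨?_, ?_, ?_⟩
      · intro a c hc; cases hc
      · intro a c hc; cases hc
      · intro a c hc; cases hc
    -- S is closed under F
    have hFS : ∀ α ∈ S, F α ∈ S := by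
      rintro α ⟨h1, h2, h3⟩
      refine ⟨?_, ?_, hF _ _ h3⟩
      · have := hF fp α h1
        rwa [hfp] at this
      · obtain ⟨d, hd, hdrep⟩ := hr α zr h2
        intro a c hc x hx
        obtain ⟨e, he, hemem⟩ := hdrep hc hx
        have hexp : OApp Q.app (OApp Q.app (some r) (some zr)) (some x) = some e := by
          simp only [OApp, Option.bind_some, Option.bind_some, hd, he]
        obtain ⟨e', he', hee⟩ := hz_spec r zr hzr x e hexp
        exact ⟨e', he', g.down c hee hemem⟩
    -- Zorn's lemma on S with the reversed BAle order
    obtain ⟨mm, hmm⟩ := exists_maximal_of_chains_bounded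
      (r := fun a b : {x : {α : A → Option A // IsBA α} // x ∈ S} => BAle b.1.1 a.1.1)
      (fun c hc => by
        rcases c.eq_empty_or_nonempty with rfl | ⟨x0, hx0⟩
        · exact ⟨⟨⟨fun _ => none, topBA⟩, topS⟩, by simp⟩
        · -- build the infimum of a nonempty chain
          set C : Set (A → Option A) := {f | ∃ x ∈ c, x.1.1 = f} with hCdef
          have hBA : ∀ α ∈ C, IsBA α := by
            rintro α ⟨x, -, rfl⟩; exact x.1.2
          have hCch : IsChain (fun α β => BAle α β) C := by
            rintro α ⟨x, hx, rfl⟩ β ⟨y, hy, rfl⟩ hne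
            have hxy : x ≠ y := fun h => hne (congrArg (fun t => t.1.1) h)
            rcases hc hx hy hxy with h | h
            · exact Or.inr h
            · exact Or.inl h
          obtain ⟨m, hmBA, hmspec, hmdef, hVch⟩ := exists_chain_inf' hcc C hBA hCch
          -- m is a lower bound of the chain
          have hm_lb : ∀ x ∈ c, BAle m x.1.1 := by
            intro x hx a v hv
            obtain ⟨cm, hcm⟩ := hmdef ⟨x.1.1, ⟨x, hx, rfl⟩, v, hv⟩
            exact ⟨cm, hcm, (hmspec hcm).2.1 ⟨x.1.1, ⟨x, hx, rfl⟩, hv⟩⟩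
          -- m is good
          have hMS : (⟨m, hmBA⟩ : {α : A → Option A // IsBA α}) ∈ S := by
            refine ⟨?_, ?_, ?_⟩
            · -- BAle fp m
              intro a cm hcm
              obtain ⟨hne', hglb⟩ := hmspec hcm
              obtain ⟨v0, α0, hα0C, hα0⟩ :
                  {v | ∃ α ∈ C, α a = some v}.Nonempty := hne'
              obtain ⟨x0, hx0c, rfl⟩ := hα0C
              obtain ⟨w, hw, -⟩ := x0.2.1 hα0
              refine ⟨w, hw, hglb.2 ?_⟩
              rintro v ⟨α, ⟨y, hy, rfl⟩, hαv⟩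
              obtain ⟨w', hw', hle⟩ := y.2.1 hαv
              rw [hw] at hw'
              obtain rfl := Option.some.inj hw'
              exact hle
            · -- zr represents m
              intro a cm hcm x hx
              obtain ⟨hne', hglb⟩ := hmspec hcm
              obtain ⟨v0, α0, hα0C, hα0⟩ :
                  {v | ∃ α ∈ C, α a = some v}.Nonempty := hne'
              obtain ⟨y0, hy0c, rfl⟩ := hα0C
              obtain ⟨d, hd, hdmem⟩ := y0.2.2.1 hα0 hx
              refine ⟨d, hd, ?_⟩
              rw [hcont {v | ∃ α ∈ C, α a = some v} ⟨v0, y0.1.1, ⟨y0, hy0c, rfl⟩, hα0⟩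
                (hVch a) cm hglb]
              rw [Set.mem_iInter₂]
              rintro v ⟨α, ⟨y, hy, rfl⟩, hαv⟩
              obtain ⟨d', hd', hd'mem⟩ := y.2.2.1 hαv hx
              rw [hd] at hd'
              obtain rfl := Option.some.inj hd'
              exact hd'mem
            · -- BAle (F m) m
              intro a cm hcm
              obtain ⟨hne', hglb⟩ := hmspec hcm
              obtain ⟨v0, α0, hα0C, hα0⟩ :
                  {v | ∃ α ∈ C, α a = some v}.Nonempty := hne'
              obtain ⟨y0, hy0c, rfl⟩ := hα0C
              have hFm : ∀ ⦃y : {x : {α : A → Option A // IsBA α} // x ∈ S}⦄, y ∈ c →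
                  BAle (F ⟨m, hmBA⟩).1 y.1.1 := fun y hy =>
                BAle_trans' (hF _ _ (hm_lb y hy)) y.2.2.2
              obtain ⟨e, he, -⟩ := hFm hy0c hα0
              refine ⟨e, he, hglb.2 ?_⟩
              rintro v ⟨α, ⟨y, hy, rfl⟩, hαv⟩
              obtain ⟨e', he', hle⟩ := hFm hy hαv
              rw [he] at he'
              obtain rfl := Option.some.inj he'
              exact hle
          exact ⟨⟨⟨m, hmBA⟩, hMS⟩, fun x hx => hm_lb x hx⟩)
      (fun {a b c} h1 h2 => BAle_trans' h2 h1)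
    -- the minimal element mm is a fixpoint of F
    have hstep : BAle mm.1.1 (F mm.1).1 :=
      hmm ⟨F mm.1, hFS mm.1 mm.2⟩ mm.2.2.2
    have h_mm_fp : BAle mm.1.1 fp.1 := hfp_max mm.1 hstep
    have h_fp_mm : BAle fp.1 mm.1.1 := mm.2.1
    -- hence mm = fp, and zr represents fp
    intro a c hc x hx
    obtain ⟨c', hc', hle⟩ := h_mm_fp hc
    obtain ⟨c'', hc'', hle'⟩ := h_fp_mm hc'
    rw [hc] at hc''
    obtain rfl := Option.some.inj hc''
    have : c' = c := le_antisymm hle hle'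
    subst this
    exact mm.2.2.1 hc' hx
  refine ⟨main, ?_⟩
  rintro ⟨r, hrf, hr⟩
  obtain ⟨zr, hzr⟩ := hz_def r
  exact ⟨zr, Q.filt_app hz_mem hrf hzr, main r hr zr hzr⟩
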